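/- Let β₁ > β₂ and let f₀, f₁, f₂, P_f : ℝ → ℝ satisfy f₀(I) = (1−I)·P_f(I) + λ·I for all I, where λ := f₀(1). Define f(X,I) := f₀(I) + f₁(I)X + f₂(I)X², h_f(z,I) := P_f(I) + z·f₁(I) + z²·(I + (1−I)f₂(I)), A₁(I) := h_f(β₁,I)/(β₂−β₁), A₂(I) := h_f(β₂,I)/(β₁−β₂), B := f₂, γ₁ := (λ−β₂)/(β₁−β₂), γ₂ := (β₁−λ)/(β₁−β₂). Suppose X, I : ℝ → ℝ are differentiable with X'(t) = f(X(t),I(t)) and I'(t) = (X(t)−1)·I(t) for all t. Then S₁ := (X−(1−I)β₂)/(β₁−β₂) and S₂ := (X−(1−I)β₁)/(β₂−β₁) satisfy I = 1−S₁−S₂, X = β₁S₁+β₂S₂, and solve the X² SSISS system: Sᵢ'(t) = (−βᵢSᵢ+γᵢ)·I − Aᵢ(I)·Sᵢ + Aⱼ(I)·Sⱼ − (βᵢ−βⱼ)·B(I)·S₁S₂ for {i,j} = {1,2}. -/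
import Mathlib


/-- Reconstructed susceptible compartment `S₁` from the RND variables `(X, I)`. -/
noncomputable def S1fun (β₁ β₂ : ℝ) (X I : ℝ → ℝ) : ℝ → ℝ :=
  fun t => (X t - (1 - I t) * β₂) / (β₁ - β₂)

/-- Reconstructed susceptible compartment `S₂` from the RND variables `(X, I)`. -/
noncomputable def S2fun (β₁ β₂ : ℝ) (X I : ℝ → ℝ) : ℝ → ℝ :=
  fun t => (X t - (1 - I t) * β₁) / (β₂ - β₁)

/-- Auxiliary function `h_f(z, I) = P_f(I) + z f₁(I) + z² (I + (1-I) f₂(I))`. -/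
noncomputable def hfun (f₁ f₂ Pf : ℝ → ℝ) (z I : ℝ) : ℝ :=
  Pf I + z * f₁ I + z ^ 2 * (I + (1 - I) * f₂ I)

/-- an RND solution transforms back to an X² SSISS solution. -/
theorem stmt_1 (β₁ β₂ : ℝ) (hβ : β₁ > β₂) (f₀ f₁ f₂ Pf : ℝ → ℝ)
    (hP : ∀ I : ℝ, f₀ I = (1 - I) * Pf I + f₀ 1 * I)
    (X I : ℝ → ℝ)
    (hX : ∀ t : ℝ, HasDerivAt X
      (f₀ (I t) + f₁ (I t) * X t + f₂ (I t) * X t ^ 2) t)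
    (hI : ∀ t : ℝ, HasDerivAt I ((X t - 1) * I t) t) :
    ∀ t : ℝ,
      I t = 1 - S1fun β₁ β₂ X I t - S2fun β₁ β₂ X I t ∧
      X t = β₁ * S1fun β₁ β₂ X I t + β₂ * S2fun β₁ β₂ X I t ∧
      HasDerivAt (S1fun β₁ β₂ X I)
        ((-β₁ * S1fun β₁ β₂ X I t + (f₀ 1 - β₂) / (β₁ - β₂)) * I t
          - hfun f₁ f₂ Pf β₁ (I t) / (β₂ - β₁) * S1fun β₁ β₂ X I t
          + hfun f₁ f₂ Pf β₂ (I t) / (β₁ - β₂) * S2fun β₁ β₂ X I t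
          - (β₁ - β₂) * f₂ (I t) * (S1fun β₁ β₂ X I t * S2fun β₁ β₂ X I t)) t ∧
      HasDerivAt (S2fun β₁ β₂ X I)
        ((-β₂ * S2fun β₁ β₂ X I t + (β₁ - f₀ 1) / (β₁ - β₂)) * I t
          - hfun f₁ f₂ Pf β₂ (I t) / (β₁ - β₂) * S2fun β₁ β₂ X I t
          + hfun f₁ f₂ Pf β₁ (I t) / (β₂ - β₁) * S1fun β₁ β₂ X I t
          - (β₂ - β₁) * f₂ (I t) * (S1fun β₁ β₂ X I t * S2fun β₁ β₂ X I t)) t := by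
  intro t
  have hne : β₁ - β₂ ≠ 0 := sub_ne_zero.mpr (ne_of_gt hβ)
  have hne' : β₂ - β₁ ≠ 0 := sub_ne_zero.mpr (ne_of_lt hβ)
  have hf0 := hP (I t)
  refine ⟨by simp only [S1fun, S2fun]; field_simp; ring,
          by simp only [S1fun, S2fun]; field_simp; ring, ?_, ?_⟩
  · have hd : HasDerivAt (S1fun β₁ β₂ X I)
        (((f₀ (I t) + f₁ (I t) * X t + f₂ (I t) * X t ^ 2)
          - (0 - (X t - 1) * I t) * β₂) / (β₁ - β₂)) t := by
      exact (((hX t).sub (((hasDerivAt_const t (1:ℝ)).sub (hI t)).mul_const β₂)).div_const _)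
    convert hd using 1
    simp only [S1fun, S2fun, hfun]
    rw [hf0]
    field_simp
    ring
  · have hd : HasDerivAt (S2fun β₁ β₂ X I)
        (((f₀ (I t) + f₁ (I t) * X t + f₂ (I t) * X t ^ 2)
          - (0 - (X t - 1) * I t) * β₁) / (β₂ - β₁)) t := by
      exact (((hX t).sub (((hasDerivAt_const t (1:ℝ)).sub (hI t)).mul_const β₁)).div_const _)
    convert hd using 1
    simp only [S1fun, S2fun, hfun]
    rw [hf0]
    field_simp
    ring
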